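/- Let Γ be a group with a convergence action on a perfect compact metric space Z, and suppose the action is uniform. Then every point of Z is intrinsically conical. -/

import Mathlib

open Filter Metric Set Topology

/-- A sequence in a group diverges to infinity if it eventually leaves every finite subset. -/
def DivergesToInfinity {G : Type*} (γ : ℕ → G) : Prop :=
  ∀ F : Finset G, {n : ℕ | γ n ∈ F}.Finite

/-- A convergence action: every sequence diverging to infinity has a subsequence converging,
uniformly on compact subsets of the complement of an exceptional point, to a constant map. -/
def ConvergenceAction (G Z : Type*) [Group G] [MetricSpace Z] [MulAction G Z] : Prop :=
  ∀ γ : ℕ → G, DivergesToInfinity γ →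
    ∃ (zp zm : Z) (k : ℕ → ℕ), StrictMono k ∧
      ∀ K : Set Z, IsCompact K → K ⊆ {zm}ᶜ →
        TendstoUniformlyOn (fun i z => γ (k i) • z) (fun _ => zp) atTop K

/-- The space of triples of pairwise distinct points. -/
def tripSet (Z : Type*) : Set (Z × Z × Z) :=
  {p | p.1 ≠ p.2.1 ∧ p.1 ≠ p.2.2 ∧ p.2.1 ≠ p.2.2}

/-- An action is uniform if the diagonal action on the space of triples of pairwise distinct
points is cocompact. -/
def UniformAction (G Z : Type*) [Group G] [MetricSpace Z] [MulAction G Z] : Prop :=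
  ∃ K : Set (Z × Z × Z), K ⊆ tripSet Z ∧ IsCompact K ∧
    ∀ p ∈ tripSet Z, ∃ γ : G, (γ • p.1, γ • p.2.1, γ • p.2.2) ∈ K

/-- A point `z` is intrinsically conical if there is a sequence `γ n → ∞` in the group such
that `γ n⁻¹ • z` converges to some `a` and the maps `γ n⁻¹` converge, uniformly on compact
subsets of `Z ∖ {z}`, to a constant `b ≠ a`. -/
def IntrinsicallyConical (G : Type*) {Z : Type*} [Group G] [MetricSpace Z] [MulAction G Z]
    (z : Z) : Prop :=
  ∃ (γ : ℕ → G) (a b : Z), DivergesToInfinity γ ∧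
    Tendsto (fun n => (γ n)⁻¹ • z) atTop (𝓝 a) ∧
    (∀ K : Set Z, IsCompact K → K ⊆ {z}ᶜ →
      TendstoUniformlyOn (fun n w => (γ n)⁻¹ • w) (fun _ => b) atTop K) ∧
    b ≠ a

section Aux

open Filter Metric Set Topology

/-- Restrict a uniform-on-a-set limit to a subsequence. -/
private lemma tuo_subseq {α : Type*} [MetricSpace α] {Z : Type*} [TopologicalSpace Z]
    {F : ℕ → Z → α} {f : Z → α} {s : Set Z} (h : TendstoUniformlyOn F f atTop s)
    {φ : ℕ → ℕ} (hφ : StrictMono φ) :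
    TendstoUniformlyOn (fun i => F (φ i)) f atTop s :=
  fun u hu => (hφ.tendsto_atTop).eventually (h u hu)

/-- Uniform convergence to a constant along a moving point of the set. -/
private lemma tuo_moving {α : Type*} [MetricSpace α] {Z : Type*} [TopologicalSpace Z]
    {F : ℕ → Z → α} {c : α} {s : Set Z} (h : TendstoUniformlyOn F (fun _ => c) atTop s)
    {w : ℕ → Z} (hw : ∀ᶠ i in atTop, w i ∈ s) :
    Tendsto (fun i => F i (w i)) atTop (𝓝 c) := by
  rw [Metric.tendsto_nhds]
  intro ε hε
  filter_upwards [(Metric.tendstoUniformlyOn_iff.1 h) ε hε, hw] with i h1 h2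
  have := h1 (w i) h2
  rwa [dist_comm] at this

end Aux

/-- For a uniform convergence action on a perfect compact metric space, every point is
intrinsically conical. -/
theorem uniform_convergence_action_all_points_intrinsically_conical
    {G Z : Type*} [Group G] [MetricSpace Z] [CompactSpace Z] [MulAction G Z]
    (hcont : ∀ γ : G, Continuous fun z : Z => γ • z)
    (hperf : ∀ z : Z, ¬ IsOpen ({z} : Set Z))
    (hconv : ConvergenceAction G Z)
    (huni : UniformAction G Z) :
    ∀ z : Z, IntrinsicallyConical G z := by
  classical
  intro z
  obtain ⟨K, hKt, hKc, hKu⟩ := huni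
  -- a point different from z, and a sequence x n → z avoiding z and y
  have hz' : ∀ ε : ℝ, 0 < ε → ∃ w : Z, dist w z < ε ∧ w ≠ z := by
    intro ε hε
    by_contra h
    push_neg at h
    exact hperf z (Metric.isOpen_singleton_iff.2 ⟨ε, hε, h⟩)
  obtain ⟨y, _, hyz⟩ := hz' 1 one_pos
  have hdyz : 0 < dist y z := dist_pos.2 hyz
  have hx : ∀ m : ℕ, ∃ w : Z, dist w z < min (1 / ((m : ℝ) + 1)) (dist y z) ∧ w ≠ z := by
    intro m
    refine hz' _ (lt_min (by positivity) hdyz)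
  choose x hxd hxz using hx
  have hxy : ∀ m, x m ≠ y := by
    intro m h
    have := (hxd m).trans_le (min_le_right _ _)
    rw [h] at this
    exact lt_irrefl _ this
  have hxlim : Tendsto x atTop (𝓝 z) := by
    rw [tendsto_iff_dist_tendsto_zero]
    refine squeeze_zero (fun m => dist_nonneg) (fun m => ((hxd m).trans_le (min_le_left _ _)).le)
      tendsto_one_div_add_atTop_nhds_zero_nat
  -- choose group elements moving the triples into K
  have htrip : ∀ m, (z, x m, y) ∈ tripSet Z := fun m => ⟨fun h => hxz m h.symm, fun h => hyz h.symm, hxy m⟩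
  choose γ hγ using fun m => hKu (z, x m, y) (htrip m)
  simp only at hγ
  -- the sequence γ diverges to infinity
  have hdiv : DivergesToInfinity γ := by
    intro F
    by_contra hF
    have hg : ∃ g ∈ F, {m : ℕ | γ m = g}.Infinite := by
      by_contra h
      push_neg at h
      refine hF (((F.finite_toSet.biUnion h).subset ?_))
      intro m hm
      exact Set.mem_biUnion hm rfl
    obtain ⟨g, _, hginf⟩ := hg
    -- the limit triple (g•z, g•z, g•y) lies in K, contradicting K ⊆ tripSet
    have hmem : ((g • z : Z), (g • z : Z), (g • y : Z)) ∈ K := by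
      rw [← hKc.isClosed.closure_eq]
      rw [mem_closure_iff_nhds]
      intro U hU
      have hf : Continuous fun w : Z => ((g • z : Z), (g • w : Z), (g • y : Z)) := by
        exact continuous_const.prodMk ((hcont g).prodMk continuous_const)
      have h1 : Tendsto (fun m => ((g • z : Z), (g • x m : Z), (g • y : Z))) atTop
          (𝓝 ((g • z : Z), (g • z : Z), (g • y : Z))) := (hf.tendsto z).comp hxlim
      obtain ⟨N, hN⟩ := (eventually_atTop).1 (h1.eventually_mem hU)
      obtain ⟨M, hMS, hMN⟩ := hginf.exists_gt N
      refine ⟨(γ M • z, γ M • x M, γ M • y), ?_, hγ M⟩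
      have : γ M = g := hMS
      rw [this]
      exact hN M hMN.le
    obtain ⟨h1, -, -⟩ := hKt hmem
    exact h1 rfl
  obtain ⟨zp, zm, k, hk, hku⟩ := hconv γ hdiv
  -- extract a convergent subsequence of the triples in K
  obtain ⟨pqr, hpqrK, φ, hφ, hTlim⟩ :=
    hKc.tendsto_subseq (x := fun i => (γ (k i) • z, γ (k i) • x (k i), γ (k i) • y))
      (fun i => hγ (k i))
  set n : ℕ → ℕ := fun i => k (φ i) with hn
  have hnmono : StrictMono n := hk.comp hφ
  obtain ⟨hpq, hpr, hqr⟩ := hKt hpqrK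
  -- component limits
  have hp : Tendsto (fun i => γ (n i) • z) atTop (𝓝 pqr.1) :=
    (continuous_fst.tendsto _).comp hTlim
  have hq : Tendsto (fun i => γ (n i) • x (n i)) atTop (𝓝 pqr.2.1) :=
    ((continuous_fst.comp continuous_snd).tendsto _).comp hTlim
  have hr : Tendsto (fun i => γ (n i) • y) atTop (𝓝 pqr.2.2) :=
    ((continuous_snd.comp continuous_snd).tendsto _).comp hTlim
  -- uniform convergence along the subsequence
  have hU : ∀ C : Set Z, IsCompact C → C ⊆ {zm}ᶜ →
      TendstoUniformlyOn (fun i w => γ (n i) • w) (fun _ => zp) atTop C :=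
    fun C hC hC' => tuo_subseq (hku C hC hC') hφ
  -- the repelling point is z
  have hzm : zm = z := by
    by_contra hne
    have hd : 0 < dist z zm := dist_pos.2 (fun h => hne h.symm)
    set C : Set Z := closedBall z (dist z zm / 2) with hCdef
    have hCc : IsCompact C := isClosed_closedBall.isCompact
    have hCs : C ⊆ {zm}ᶜ := by
      intro w hw h
      simp only [mem_compl_iff, mem_singleton_iff] at h
      rw [h] at hw
      have := mem_closedBall.1 hw
      rw [dist_comm] at this
      linarith
    have h1 : Tendsto (fun i => γ (n i) • z) atTop (𝓝 zp) :=
      (hU C hCc hCs).tendsto_at (mem_closedBall_self (by positivity))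
    have h2 : Tendsto (fun i => γ (n i) • x (n i)) atTop (𝓝 zp) := by
      refine tuo_moving (hU C hCc hCs) ?_
      obtain ⟨N, hN⟩ := exists_nat_one_div_lt (ε := dist z zm / 2) (by positivity)
      refine eventually_atTop.2 ⟨N, fun i hi => ?_⟩
      have hni : N ≤ n i := le_trans hi (hnmono.id_le i)
      have : dist (x (n i)) z < 1 / ((N : ℝ) + 1) := by
        refine lt_of_lt_of_le ((hxd (n i)).trans_le (min_le_left _ _)) ?_
        apply one_div_le_one_div_of_le (by positivity)
        have := (Nat.cast_le (α := ℝ)).2 hni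
        linarith
      exact mem_closedBall.2 (le_of_lt (this.trans hN))
    exact hpq (((tendsto_nhds_unique hp h1).trans (tendsto_nhds_unique h2 hq)))
  subst hzm
  -- the third coordinate limit is the attracting point
  have hyC : IsCompact ({y} : Set Z) := isCompact_singleton
  have hyC' : ({y} : Set Z) ⊆ {zm}ᶜ := by
    intro w hw
    simp only [mem_singleton_iff] at hw
    subst hw
    exact hyz
  have hrzp : pqr.2.2 = zp :=
    tendsto_nhds_unique hr ((hU _ hyC hyC').tendsto_at rfl)
  -- assemble the conical sequence
  refine ⟨fun i => (γ (n i))⁻¹, pqr.1, zp, ?_, ?_, ?_, ?_⟩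
  · intro F
    have hsub : {i : ℕ | (γ (n i))⁻¹ ∈ F} ⊆ n ⁻¹' {m : ℕ | γ m ∈ F.image (·⁻¹)} := by
      intro i hi
      exact Finset.mem_image.2 ⟨(γ (n i))⁻¹, hi, inv_inv _⟩
    exact ((hdiv (F.image (·⁻¹))).preimage (Set.injOn_of_injective hnmono.injective)).subset hsub
  · simpa using hp
  · intro C hC hC'
    simpa using hU C hC hC'
  · exact fun h => hpr (hrzp.trans h).symm
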